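/- Let m ≥ 1, Q(y) = √8(m+1)y^m/(1+y^{2m+2}), A_θ[Q](y) = -2(m+1)y^{2m+2}/(1+y^{2m+2}), and define the potential Ṽ_Q(y) = (m+2+A_θ[Q](y))² + (1/2)y²Q(y)². Then Ṽ_Q(y) ≥ m² for all y > 0. -/

import Mathlib

/-- The `m`-equivariant Jackiw–Pi vortex profile. -/
noncomputable def Q (m : ℕ) (r : ℝ) : ℝ :=
  Real.sqrt 8 * (m + 1) * r ^ m / (1 + r ^ (2 * m + 2))

/-- Closed-form of the angular connection component `A_θ[Q]`. -/
noncomputable def AthetaQ (m : ℕ) (y : ℝ) : ℝ :=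
  -2 * (m + 1) * y ^ (2 * m + 2) / (1 + y ^ (2 * m + 2))

/-- The potential of the twice-conjugated linearized Hamiltonian `H̃_Q`. -/
noncomputable def Vtld (m : ℕ) (y : ℝ) : ℝ :=
  (m + 2 + AthetaQ m y) ^ 2 + (1 / 2) * y ^ 2 * (Q m y) ^ 2

/-- Lower bound `Ṽ_Q ≥ m²` for `m ≥ 1` and `y > 0`. -/
theorem stmt8 (m : ℕ) (hm : 1 ≤ m) (y : ℝ) (hy : 0 < y) :
    (m : ℝ) ^ 2 ≤ Vtld m y := by
  have ht : (0:ℝ) < y ^ (2*m+2) := pow_pos hy _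
  have h1 : (0:ℝ) < 1 + y ^ (2*m+2) := by linarith
  have h8 : Real.sqrt 8 ^ 2 = 8 := Real.sq_sqrt (by norm_num)
  have hy2 : y^2 * (y^m)^2 = y^(2*m+2) := by
    rw [← pow_mul, ← pow_add]; ring_nf
  have hQ2 : y^2 * (Q m y)^2 = 8*((m:ℝ)+1)^2 * y^(2*m+2) / (1+y^(2*m+2))^2 := by
    unfold Q
    rw [div_pow]
    field_simp
    linear_combination ((y^2 * (y^m)^2)) * h8 + 8*((m:ℝ)+1)^2 * hy2
  have key : Vtld m y = (m:ℝ)^2 + 4*(m+1)/(1 + y^(2*m+2)) := by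
    unfold Vtld AthetaQ
    rw [show (1:ℝ)/2 * y^2 * Q m y ^2 = 1/2 * (y^2 * Q m y ^2) by ring, hQ2]
    field_simp
    ring
  rw [key]
  have : 0 < 4*((m:ℝ)+1)/(1 + y^(2*m+2)) := by positivity
  linarith
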